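/- Let {u_j}_{j=1}^{k} and {n_l}_{l=1}^{l_n} be orthonormal families in ℝ^M with ⟨u_j, n_l⟩ = 0 for all j, l. Let C ≥ 0 and θ_1, …, θ_{k−1} be real numbers, set ρ_i := Σ_{j=1}^{i−1} sin²(θ_j) for 1 ≤ i ≤ k (so ρ_1 = 0), and assume C² + ρ_k ≤ 1. For each 1 ≤ i ≤ k define v_i := Σ_{j=1}^{i−1} sin(θ_j) u_j + √(1 − C² − ρ_i) u_i + w_i, where each w_i lies in the span of {n_1, …, n_{l_n}}. Let P_U denote the orthogonal projection onto U := span{u_1, …, u_k}. Then the vectors P_U v_1, …, P_U v_k are linearly independent if and only if C² + ρ_k < 1. -/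

import Mathlib

open scoped RealInnerProductSpace BigOperators

/-- The projected ascent directions `P_U v₁, …, P_U v_k` produced by the
nullspace-preserving construction are linearly independent if and only if
`C² + ρ_k < 1`. -/
theorem projected_directions_linearIndependent_iff (M k ln : ℕ) (hk : 0 < k)
    (u : Fin k → EuclideanSpace ℝ (Fin M)) (hu : Orthonormal ℝ u)
    (n : Fin ln → EuclideanSpace ℝ (Fin M)) (hn : Orthonormal ℝ n)
    (hun : ∀ (j : Fin k) (l : Fin ln), ⟪u j, n l⟫ = 0)
    (C : ℝ) (hC : 0 ≤ C) (θ : Fin k → ℝ)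
    (ρ : Fin k → ℝ)
    (hρ : ∀ i : Fin k, ρ i = ∑ j ∈ Finset.univ.filter (fun j => j < i), Real.sin (θ j) ^ 2)
    (hbound : C ^ 2 + ρ ⟨k - 1, by omega⟩ ≤ 1)
    (w : Fin k → EuclideanSpace ℝ (Fin M))
    (hw : ∀ i, w i ∈ Submodule.span ℝ (Set.range n))
    (v : Fin k → EuclideanSpace ℝ (Fin M))
    (hv : ∀ i, v i = (∑ j ∈ Finset.univ.filter (fun j => j < i), Real.sin (θ j) • u j)
      + Real.sqrt (1 - C ^ 2 - ρ i) • u i + w i) :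
    LinearIndependent ℝ (fun i : Fin k =>
        (Submodule.span ℝ (Set.range u)).subtypeL.comp
          ((Submodule.span ℝ (Set.range u)).orthogonalProjection) (v i))
      ↔ C ^ 2 + ρ ⟨k - 1, by omega⟩ < 1 := by
  classical
  set U := Submodule.span ℝ (Set.range u) with hU
  set T := U.subtypeL.comp (U.orthogonalProjection) with hT
  set last : Fin k := ⟨k - 1, by omega⟩ with hlast
  set c : Fin k → ℝ := fun i => Real.sqrt (1 - C ^ 2 - ρ i) with hc
  have hile : ∀ i : Fin k, i ≤ last := fun i => by
    simp only [Fin.le_def, hlast]; omega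
  have hρmono : ∀ i, ρ i ≤ ρ last := by
    intro i
    rw [hρ, hρ]
    apply Finset.sum_le_sum_of_subset_of_nonneg
    · intro j hj
      simp only [Finset.mem_filter, Finset.mem_univ, true_and] at hj ⊢
      exact lt_of_lt_of_le hj (hile i)
    · intro j _ _; positivity
  have hρnn : ∀ i, 0 ≤ ρ i := by
    intro i; rw [hρ]; apply Finset.sum_nonneg; intro j _; positivity
  -- compute T on the pieces
  have hTu : ∀ j, T (u j) = u j := by
    intro j
    simp only [hT, ContinuousLinearMap.comp_apply, Submodule.subtypeL_apply]
    exact Submodule.starProjection_eq_self_iff.mpr (Submodule.subset_span ⟨j, rfl⟩)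
  have hUn : ∀ l, n l ∈ Uᗮ := by
    intro l
    rw [Submodule.mem_orthogonal]
    intro y hy
    induction hy using Submodule.span_induction with
    | mem x hx => obtain ⟨j, rfl⟩ := hx; exact hun j l
    | zero => simp
    | add a b _ _ ha hb => simp [inner_add_left, ha, hb]
    | smul r a _ ha => simp [inner_smul_left, ha]
  have hTw : ∀ i, T (w i) = 0 := by
    intro i
    have hwi : w i ∈ Uᗮ := by
      refine Submodule.span_le.mpr ?_ (hw i)
      rintro x ⟨l, rfl⟩; exact hUn l
    simp only [hT, ContinuousLinearMap.comp_apply, Submodule.subtypeL_apply]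
    rw [Submodule.orthogonalProjectionOnto_apply_of_mem_orthogonal hwi]
    simp
  have hTv : ∀ i, T (v i)
      = (∑ j ∈ Finset.univ.filter (fun j => j < i), Real.sin (θ j) • u j) + c i • u i := by
    intro i
    rw [hv i, map_add, map_add, map_sum, hTw, map_smul, hTu, add_zero]
    congr 1
    refine Finset.sum_congr rfl fun j _ => ?_
    rw [map_smul, hTu]
  constructor
  · -- linear independence → strict bound
    intro hli
    by_contra hge
    have heq : C ^ 2 + ρ last = 1 := le_antisymm hbound (not_lt.mp hge)
    have hclast : c last = 0 := by
      rw [hc]; simp only []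
      rw [show (1 : ℝ) - C ^ 2 - ρ last = 0 by linarith, Real.sqrt_zero]
    -- all vectors lie in span of the first k-1 basis vectors
    by_cases hk1 : k = 1
    · -- then last = 0 = i for all i, and T (v 0) = 0, contradicting independence
      have h0 : T (v last) = 0 := by
        rw [hTv, hclast, zero_smul, add_zero]
        apply Finset.sum_eq_zero
        intro j hj
        exfalso
        simp only [Finset.mem_filter, Finset.mem_univ, true_and, Fin.lt_def, hlast] at hj
        omega
      exact hli.ne_zero last h0
    · set g : Fin (k - 1) → EuclideanSpace ℝ (Fin M) :=
        fun j => u (Fin.castLE (by omega) j) with hg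
      set W := Submodule.span ℝ (Set.range g) with hW
      have hmemW : ∀ i, T (v i) ∈ W := by
        intro i
        rw [hTv]
        apply Submodule.add_mem
        · apply Submodule.sum_mem
          intro j hj
          simp only [Finset.mem_filter, Finset.mem_univ, true_and] at hj
          have hjlt : (j : ℕ) < k - 1 := by
            have := hile i
            simp only [Fin.lt_def, Fin.le_def, hlast] at hj this ⊢
            omega
          exact Submodule.smul_mem _ _
            (Submodule.subset_span ⟨⟨j, hjlt⟩, by simp [hg, Fin.castLE, Fin.ext_iff]⟩)
        · rcases eq_or_ne i last with rfl | hne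
          · rw [hclast, zero_smul]; exact Submodule.zero_mem _
          · have hilt : (i : ℕ) < k - 1 := by
              have := hile i
              simp only [Fin.le_def, hlast] at this
              rcases lt_or_eq_of_le this with h | h
              · exact h
              · exact absurd (Fin.ext h) hne
            exact Submodule.smul_mem _ _
              (Submodule.subset_span ⟨⟨i, hilt⟩, by simp [hg, Fin.castLE, Fin.ext_iff]⟩)
      have hli' : LinearIndependent ℝ (fun i : Fin k => (⟨T (v i), hmemW i⟩ : W)) := by
        apply LinearIndependent.of_comp W.subtype
        exact hli
      have hcard := hli'.fintype_card_le_finrank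
      have hWle : Module.finrank ℝ W ≤ k - 1 := by
        simpa [Set.finrank] using (finrank_range_le_card g)
      simp only [Fintype.card_fin] at hcard
      omega
  · -- strict bound → linear independence
    intro hlt
    have hcpos : ∀ i, 0 < c i := fun i =>
      Real.sqrt_pos.mpr (by have := hρmono i; linarith)
    rw [Fintype.linearIndependent_iff]
    intro g hg
    have hkey : ∀ m : Fin k,
        c m * g m + Real.sin (θ m) * ∑ i ∈ Finset.univ.filter (fun i => m < i), g i = 0 := by
      intro m
      have h0 : ⟪u m, ∑ i, g i • T (v i)⟫ = 0 := by rw [hg, inner_zero_right]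
      have huu := orthonormal_iff_ite.mp hu
      rw [inner_sum] at h0
      have hterm : ∀ i, ⟪u m, g i • T (v i)⟫
          = g i * ((if m < i then Real.sin (θ m) else 0) + if m = i then c i else 0) := by
        intro i
        rw [real_inner_smul_right, hTv, inner_add_right, inner_sum, real_inner_smul_right, huu]
        congr 2
        · rw [Finset.sum_congr rfl (fun j _ => by
            rw [real_inner_smul_right, huu, mul_ite, mul_one, mul_zero])]
          rw [Finset.sum_ite_eq]
          simp [Finset.mem_filter]
        · simp [mul_ite]
      rw [Finset.sum_congr rfl (fun i _ => hterm i)] at h0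
      simp only [mul_add] at h0
      rw [Finset.sum_add_distrib] at h0
      have h1 : (∑ i, g i * if m = i then c i else 0) = g m * c m := by
        rw [Finset.sum_congr rfl (fun i _ => by rw [mul_ite, mul_zero]), Finset.sum_ite_eq]
        simp
      have h2 : (∑ i, g i * if m < i then Real.sin (θ m) else 0)
          = Real.sin (θ m) * ∑ i ∈ Finset.univ.filter (fun i => m < i), g i := by
        simp only [mul_ite, mul_zero]
        rw [← Finset.sum_filter, Finset.mul_sum]
        exact Finset.sum_congr rfl (fun i _ => mul_comm _ _)
      rw [h1, h2] at h0
      linarith [h0]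
    -- downward induction
    have hzero : ∀ t : ℕ, ∀ m : Fin k, k - (m : ℕ) ≤ t → g m = 0 := by
      intro t
      induction t with
      | zero => intro m hm; exfalso; have := m.isLt; omega
      | succ t ih =>
        intro m hm
        have hsum : (∑ i ∈ Finset.univ.filter (fun i => m < i), g i) = 0 := by
          apply Finset.sum_eq_zero
          intro i hi
          simp only [Finset.mem_filter, Finset.mem_univ, true_and, Fin.lt_def] at hi
          exact ih i (by omega)
        have := hkey m
        rw [hsum, mul_zero, add_zero] at this
        exact (mul_eq_zero.mp this).resolve_left (ne_of_gt (hcpos m))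
    intro i
    exact hzero k i (by omega)
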